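/- (ER for single-element sampling.) Assume each f_i is L_i-smooth and bounded below with f_i* = inf_x f_i(x), and that f attains its minimum at some point x*. Let p_1, …, p_n > 0 with ∑_i p_i = 1, and let 𝒟 be the single-element sampling distribution: v = e_i/p_i with probability p_i (e_i the i-th standard basis vector of ℝ^n). Set σ* = (1/n)∑_{i=1}^n (f_i(x*) − f_i*) and A = (1/n)·max_i (L_i/p_i). Then for all x ∈ ℝ^d, E_v‖g(x,v)‖² ≤ 2A·(f(x) − f^inf) + 2A·σ*; i.e., ER holds with constants A = (1/n)max_i L_i/p_i, B = 0, C = 2Aσ*. -/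

import Mathlib

open MeasureTheory

noncomputable section

/-- The finite-sum objective `f(x) = (1/n) ∑ i, f i x`. -/
def favg {n d : ℕ} (f : Fin n → EuclideanSpace ℝ (Fin d) → ℝ)
    (x : EuclideanSpace ℝ (Fin d)) : ℝ :=
  (n : ℝ)⁻¹ * ∑ i, f i x

/-- The stochastic gradient `g(x, v) = (1/n) ∑ i, v i • ∇ f i x`. -/
def sgrad {n d : ℕ} (f : Fin n → EuclideanSpace ℝ (Fin d) → ℝ)
    (x : EuclideanSpace ℝ (Fin d)) (v : Fin n → ℝ) : EuclideanSpace ℝ (Fin d) :=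
  (n : ℝ)⁻¹ • ∑ i, v i • gradient (f i) x

lemma fderiv_inner_grad {d : ℕ} (f : EuclideanSpace ℝ (Fin d) → ℝ) (y u : EuclideanSpace ℝ (Fin d))
    (h : DifferentiableAt ℝ f y) : fderiv ℝ f y u = inner ℝ (gradient f y) u := by
  have := h.hasGradientAt
  rw [hasGradientAt_iff_hasFDerivAt] at this
  rw [this.fderiv]; simp

lemma descent_lemma {d : ℕ} (f : EuclideanSpace ℝ (Fin d) → ℝ) (L : ℝ) (hL : 0 ≤ L)
    (hdiff : Differentiable ℝ f) (hlip : LipschitzWith L.toNNReal (gradient f))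
    (x u : EuclideanSpace ℝ (Fin d)) :
    f (x + u) ≤ f x + inner ℝ (gradient f x) u + L / 2 * ‖u‖ ^ 2 := by
  set φ : ℝ → ℝ := fun t => f (x + t • u) - t * inner ℝ (gradient f x) u - L / 2 * t ^ 2 * ‖u‖ ^ 2
    with hφ
  have hc : ∀ t : ℝ, HasDerivAt (fun t : ℝ => x + t • u) u t := fun t => by
    simpa using ((hasDerivAt_id t).smul_const u).const_add x
  have hφ' : ∀ t : ℝ, HasDerivAt φ
      ((inner ℝ (gradient f (x + t • u)) u : ℝ) - inner ℝ (gradient f x) u - L * t * ‖u‖ ^ 2) t := by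
    intro t
    have h1 : HasDerivAt (fun t : ℝ => f (x + t • u))
        ((inner ℝ (gradient f (x + t • u)) u : ℝ)) t := by
      have := (hdiff (x + t • u)).hasFDerivAt.comp_hasDerivAt t (hc t)
      rwa [fderiv_inner_grad f _ u (hdiff _)] at this
    have h2 : HasDerivAt (fun t : ℝ => t * (inner ℝ (gradient f x) u : ℝ))
        (inner ℝ (gradient f x) u) t := by
      simpa using (hasDerivAt_id t).mul_const (inner ℝ (gradient f x) u : ℝ)
    have h3 : HasDerivAt (fun t : ℝ => L / 2 * t ^ 2 * ‖u‖ ^ 2)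
        (L * t * ‖u‖ ^ 2) t := by
      have := ((hasDerivAt_pow 2 t).const_mul (L / 2)).mul_const (‖u‖ ^ 2)
      refine this.congr_deriv ?_
      rw [show (2:ℕ) - 1 = 1 from rfl, pow_one]
      push_cast
      ring
    exact (h1.sub h2).sub h3
  have hderiv_nonpos : ∀ t ∈ interior (Set.Icc (0:ℝ) 1), deriv φ t ≤ 0 := by
    intro t ht
    rw [interior_Icc, Set.mem_Ioo] at ht
    rw [(hφ' t).deriv]
    have hb : (inner ℝ (gradient f (x + t • u)) u : ℝ) - inner ℝ (gradient f x) u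
        ≤ L * t * ‖u‖ ^ 2 := by
      have h1 : (inner ℝ (gradient f (x + t • u)) u : ℝ) - inner ℝ (gradient f x) u
          = inner ℝ (gradient f (x + t • u) - gradient f x) u := by
        rw [inner_sub_left]
      rw [h1]
      calc (inner ℝ (gradient f (x + t • u) - gradient f x) u : ℝ)
          ≤ ‖gradient f (x + t • u) - gradient f x‖ * ‖u‖ := real_inner_le_norm _ _
        _ ≤ (L * ‖t • u‖) * ‖u‖ := by
            gcongr
            have := hlip.dist_le_mul (x + t • u) x
            rw [dist_eq_norm, dist_eq_norm, Real.coe_toNNReal L hL] at this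
            simpa using this
        _ = L * t * ‖u‖ ^ 2 := by
            rw [norm_smul, Real.norm_eq_abs, abs_of_pos ht.1]; ring
    linarith
  have hanti : AntitoneOn φ (Set.Icc 0 1) := by
    apply antitoneOn_of_deriv_nonpos (convex_Icc 0 1)
    · exact Continuous.continuousOn
        (continuous_iff_continuousAt.mpr fun t => (hφ' t).differentiableAt.continuousAt)
    · intro t ht
      exact (hφ' t).differentiableAt.differentiableWithinAt
    · exact hderiv_nonpos
  have := hanti (Set.left_mem_Icc.mpr zero_le_one) (Set.right_mem_Icc.mpr zero_le_one) zero_le_one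
  simp only [hφ, zero_smul, add_zero, zero_mul, pow_two, mul_zero, zero_pow, sub_zero,
    one_smul, one_mul, one_pow, mul_one] at this
  linarith

lemma grad_sq_le_two_L_sub_inf {d : ℕ} (f : EuclideanSpace ℝ (Fin d) → ℝ) (L : ℝ) (hL : 0 ≤ L)
    (hdiff : Differentiable ℝ f) (hlip : LipschitzWith L.toNNReal (gradient f))
    (hbdd : BddBelow (Set.range f)) (x : EuclideanSpace ℝ (Fin d)) :
    ‖gradient f x‖ ^ 2 ≤ 2 * L * (f x - ⨅ y, f y) := by
  set g := gradient f x with hg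
  have key : ∀ t : ℝ, (⨅ y, f y) ≤ f x - t * ‖g‖ ^ 2 + L / 2 * t ^ 2 * ‖g‖ ^ 2 := by
    intro t
    have hd := descent_lemma f L hL hdiff hlip x (-(t • g))
    have h1 : (inner ℝ g (-(t • g)) : ℝ) = -(t * ‖g‖ ^ 2) := by
      rw [inner_neg_right, real_inner_smul_right, real_inner_self_eq_norm_sq]
    have h2 : ‖-(t • g)‖ ^ 2 = t ^ 2 * ‖g‖ ^ 2 := by
      rw [norm_neg, norm_smul, mul_pow, Real.norm_eq_abs, sq_abs]
    rw [h1, h2] at hd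
    have := ciInf_le hbdd (x + -(t • g))
    linarith
  have hfx : (⨅ y, f y) ≤ f x := ciInf_le hbdd x
  rcases eq_or_lt_of_le hL with hL0 | hLpos
  · -- L = 0 : gradient must vanish
    have hg0 : ‖g‖ ^ 2 = 0 := by
      by_contra h
      have hpos : 0 < ‖g‖ ^ 2 := lt_of_le_of_ne (by positivity) (Ne.symm h)
      have := key ((f x - (⨅ y, f y) + 1) / ‖g‖ ^ 2)
      rw [← hL0] at this
      rw [div_mul_cancel₀ _ hpos.ne'] at this
      linarith
    rw [hg0, ← hL0]
    linarith
  · have := key (1 / L)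
    have hL' : L ≠ 0 := ne_of_gt hLpos
    field_simp at this
    have hLL : 0 < L * L := mul_pos hLpos hLpos
    nlinarith [mul_pos hLL hLpos, sq_nonneg (‖g‖ ^ 2)]


/-- **Proposition (ER for single-element sampling), with
`A = (1/n) max_i (L i / p i)`, `B = 0`, `C = 2·A·σ*`.**
The sampling distribution puts mass `p i` on the vector `e i / p i = Pi.single i (p i)⁻¹`. -/
theorem ER_of_single_element_sampling
    {d n : ℕ} (hn : 0 < n)
    (f : Fin n → EuclideanSpace ℝ (Fin d) → ℝ)
    (L : Fin n → ℝ) (hLnonneg : ∀ i, 0 ≤ L i)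
    (hdiff : ∀ i, Differentiable ℝ (f i))
    (hsmooth : ∀ i, LipschitzWith (L i).toNNReal (gradient (f i)))
    (hbelow : ∀ i, BddBelow (Set.range (f i)))
    (xstar : EuclideanSpace ℝ (Fin d)) (hmin : ∀ y, favg f xstar ≤ favg f y)
    -- the sampling probabilities
    (p : Fin n → ℝ) (hp : ∀ i, 0 < p i) (hpsum : ∑ i, p i = 1)
    -- the single-element sampling distribution
    (𝒟 : Measure (Fin n → ℝ))
    (h𝒟 : 𝒟 = ∑ i, ENNReal.ofReal (p i) • Measure.dirac (Pi.single i (p i)⁻¹))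
    -- `σ* = (1/n) ∑ i, (f i x* − inf f i)` and `A = (1/n) max_i (L i / p i)`
    (σstar A : ℝ)
    (hσstar : σstar = (n : ℝ)⁻¹ * ∑ i, (f i xstar - ⨅ y, f i y))
    (hAdef : A = (n : ℝ)⁻¹ * Finset.univ.sup'
      (Finset.univ_nonempty_iff.mpr (Fin.pos_iff_nonempty.mp hn))
      (fun i => L i / p i)) :
    ∀ x, ∫ v, ‖sgrad f x v‖ ^ 2 ∂𝒟 ≤
      2 * A * (favg f x - ⨅ y, favg f y) + 2 * A * σstar := by
  intro x
  have hne : Finset.univ.Nonempty (α := Fin n) :=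
    Finset.univ_nonempty_iff.mpr (Fin.pos_iff_nonempty.mp hn)
  have hNpos : (0:ℝ) < (n : ℝ) := Nat.cast_pos.mpr hn
  set M : ℝ := Finset.univ.sup' hne (fun i => L i / p i) with hM
  -- the inf of favg is attained at xstar
  have hinf_favg : (⨅ y, favg f y) = favg f xstar := by
    apply le_antisymm
    · exact ciInf_le ⟨favg f xstar, by rintro _ ⟨y, rfl⟩; exact hmin y⟩ xstar
    · exact le_ciInf hmin
  -- evaluate the integral
  have hcont : Continuous (fun v : Fin n → ℝ => ‖sgrad f x v‖ ^ 2) := by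
    unfold sgrad; fun_prop
  have hint : ∫ v, ‖sgrad f x v‖ ^ 2 ∂𝒟
      = ∑ i, p i * ‖sgrad f x (Pi.single i (p i)⁻¹)‖ ^ 2 := by
    rw [h𝒟, integral_finset_sum_measure (fun i _ => by
      refine Integrable.smul_measure ?_ ENNReal.ofReal_ne_top
      exact ⟨hcont.aestronglyMeasurable, by
        rw [HasFiniteIntegral, lintegral_dirac]; exact ENNReal.coe_lt_top⟩)]
    refine Finset.sum_congr rfl fun i _ => ?_
    rw [integral_smul_measure, integral_dirac, ENNReal.toReal_ofReal (hp i).le,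
      smul_eq_mul]
  -- compute sgrad at the single vectors
  have hsgrad : ∀ i, sgrad f x (Pi.single i (p i)⁻¹)
      = ((n : ℝ)⁻¹ * (p i)⁻¹) • gradient (f i) x := by
    intro i
    unfold sgrad
    rw [Finset.sum_eq_single i (fun j _ hj => by rw [Pi.single_eq_of_ne hj, zero_smul])
      (fun h => absurd (Finset.mem_univ i) h), Pi.single_eq_same, smul_smul]
  -- per-term bound from smoothness
  have hterm : ∀ i, p i * ‖sgrad f x (Pi.single i (p i)⁻¹)‖ ^ 2
      ≤ 2 * (n:ℝ)⁻¹ * M * ((n:ℝ)⁻¹ * (f i x - ⨅ y, f i y)) := by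
    intro i
    have hgs := grad_sq_le_two_L_sub_inf (f i) (L i) (hLnonneg i) (hdiff i) (hsmooth i)
      (hbelow i) x
    have hDpos : 0 ≤ f i x - ⨅ y, f i y := sub_nonneg.mpr (ciInf_le (hbelow i) x)
    have hMi : L i / p i ≤ M := Finset.le_sup' (fun i => L i / p i) (Finset.mem_univ i)
    rw [hsgrad i, norm_smul, Real.norm_eq_abs, abs_of_pos (mul_pos (inv_pos.mpr hNpos) (inv_pos.mpr (hp i))), mul_pow]
    have h1 : p i * (((n:ℝ)⁻¹ * (p i)⁻¹) ^ 2 * ‖gradient (f i) x‖ ^ 2)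
        = (n:ℝ)⁻¹ ^ 2 * (p i)⁻¹ * ‖gradient (f i) x‖ ^ 2 := by
      have hpne : p i ≠ 0 := (hp i).ne'
      field_simp
    rw [h1]
    calc (n:ℝ)⁻¹ ^ 2 * (p i)⁻¹ * ‖gradient (f i) x‖ ^ 2
        ≤ (n:ℝ)⁻¹ ^ 2 * (p i)⁻¹ * (2 * L i * (f i x - ⨅ y, f i y)) :=
          mul_le_mul_of_nonneg_left hgs
            (mul_nonneg (sq_nonneg _) (inv_pos.mpr (hp i)).le)
      _ = 2 * (n:ℝ)⁻¹ * (L i / p i) * ((n:ℝ)⁻¹ * (f i x - ⨅ y, f i y)) := by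
          rw [div_eq_mul_inv]
          ring
      _ ≤ 2 * (n:ℝ)⁻¹ * M * ((n:ℝ)⁻¹ * (f i x - ⨅ y, f i y)) := by
          apply mul_le_mul_of_nonneg_right _ (mul_nonneg (inv_pos.mpr hNpos).le hDpos)
          apply mul_le_mul_of_nonneg_left hMi
          positivity
  -- sum up
  have hsum : ∑ i, p i * ‖sgrad f x (Pi.single i (p i)⁻¹)‖ ^ 2
      ≤ 2 * (n:ℝ)⁻¹ * M * ((n:ℝ)⁻¹ * ∑ i, (f i x - ⨅ y, f i y)) := by
    calc ∑ i, p i * ‖sgrad f x (Pi.single i (p i)⁻¹)‖ ^ 2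
        ≤ ∑ i, 2 * (n:ℝ)⁻¹ * M * ((n:ℝ)⁻¹ * (f i x - ⨅ y, f i y)) :=
          Finset.sum_le_sum fun i _ => hterm i
      _ = 2 * (n:ℝ)⁻¹ * M * ((n:ℝ)⁻¹ * ∑ i, (f i x - ⨅ y, f i y)) := by
          rw [← Finset.mul_sum, ← Finset.mul_sum]
  rw [hint]
  refine hsum.trans ?_
  have hsplit : (n:ℝ)⁻¹ * ∑ i, (f i x - ⨅ y, f i y)
      = (favg f x - ⨅ y, favg f y) + σstar := by
    rw [hinf_favg, hσstar]
    unfold favg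
    rw [Finset.sum_sub_distrib, Finset.sum_sub_distrib]
    ring
  rw [hsplit, hAdef]
  exact le_of_eq (by ring)

end
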